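/- For every positive integer n: if n is even then 4 * (∑_{k=1}^n L_{2k}^3) = 5 * F_n * F_{n+1} * (L_n * L_{n+1} * L_{2n+1} + 16), and if n is odd then 4 * (∑_{k=1}^n L_{2k}^3) = L_n * L_{n+1} * (5 * F_n * F_{n+1} * L_{2n+1} + 16). -/

import Mathlib

open Finset

def L : ℕ → ℤ
  | 0 => 2
  | 1 => 1
  | n + 2 => L (n + 1) + L n

def F (n : ℕ) : ℤ := Nat.fib n

lemma F_add_two (n : ℕ) : F (n + 2) = F (n + 1) + F n := by
  simp [F, Nat.fib_add_two]; ring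

lemma L_eq (n : ℕ) : L n = 2 * F (n + 1) - F n := by
  induction n using Nat.twoStepInduction with
  | zero => simp [L, F]
  | one => simp [L, F]
  | more n ih1 ih2 =>
      have h := F_add_two n
      have h2 := F_add_two (n + 1)
      simp only [L] at *
      rw [ih1, ih2, h2, h]; ring

lemma cassini (n : ℕ) : F (n + 1) ^ 2 - F n * F (n + 2) = (-1 : ℤ) ^ n := by
  induction n with
  | zero => simp [F]
  | succ n ih =>
      rw [F_add_two (n + 1), F_add_two n, pow_succ]
      rw [F_add_two n] at ih
      linear_combination -ih

lemma F_odd (n : ℕ) : F (2 * n + 1) = F (n + 1) ^ 2 + F n ^ 2 := by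
  simp [F, Nat.fib_two_mul_add_one]

lemma F_even (n : ℕ) : F (2 * n + 2) = F (n + 1) * (2 * F n + F (n + 1)) := by
  simp [F, Nat.fib_two_mul_add_two]

lemma sum_step (f : ℕ → ℤ) (n : ℕ) :
    ∑ k ∈ Icc 1 (n + 1), f k = (∑ k ∈ Icc 1 n, f k) + f (n + 1) := by
  have h1 : Icc 1 (n + 1) = insert (n + 1) (Icc 1 n) := by
    ext x
    simp only [Finset.mem_Icc, Finset.mem_insert]
    omega
  rw [h1, Finset.sum_insert (by simp)]
  ring

theorem stmt18 (n : ℕ) (hn : 0 < n) :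
    (Even n → 4 * ∑ k ∈ Finset.Icc 1 n, L (2 * k) ^ 3 =
      5 * F n * F (n + 1) * (L n * L (n + 1) * L (2 * n + 1) + 16)) ∧
    (Odd n → 4 * ∑ k ∈ Finset.Icc 1 n, L (2 * k) ^ 3 =
      L n * L (n + 1) * (5 * F n * F (n + 1) * L (2 * n + 1) + 16)) := by
  induction n, hn using Nat.le_induction with
  | base =>
      constructor
      · intro h; exact absurd h (by decide)
      · intro _
        norm_num [L, F]
  | succ n hn1 ih =>
      obtain ⟨ihE, ihO⟩ := ih
      have hF2 : F (n + 2) = F n + F (n + 1) := by rw [F_add_two]; ring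
      have hF3 : F (n + 3) = F n + 2 * F (n + 1) := by
        rw [F_add_two (n + 1), hF2]; ring
      have hFo : F (2 * n + 1) = F (n + 1) ^ 2 + F n ^ 2 := F_odd n
      have hFe : F (2 * n + 2) = F (n + 1) * (2 * F n + F (n + 1)) := F_even n
      have hFo2 : F (2 * n + 3) = (F n + F (n + 1)) ^ 2 + F (n + 1) ^ 2 := by
        have h := F_odd (n + 1)
        have h2 : 2 * (n + 1) + 1 = 2 * n + 3 := by ring
        rw [h2] at h
        rw [h, hF2]
      have hF4 : F (2 * n + 4) = F (2 * n + 3) + F (2 * n + 2) := by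
        rw [F_add_two]
      have hLn : L n = 2 * F (n + 1) - F n := L_eq n
      have hLn1 : L (n + 1) = 2 * F n + F (n + 1) := by rw [L_eq, hF2]; ring
      have hLn2 : L (n + 2) = F n + 3 * F (n + 1) := by rw [L_eq, hF3, hF2]; ring
      have hL1 : L (2 * n + 1) = 4 * F n * F (n + 1) + F (n + 1) ^ 2 - F n ^ 2 := by
        rw [L_eq, hFe, hFo]; ring
      have hL2 : L (2 * n + 2) = 2 * F n ^ 2 + 2 * F n * F (n + 1) + 3 * F (n + 1) ^ 2 := by
        rw [L_eq, hFo2, hFe]; ring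
      have hL3 : L (2 * n + 3) = F n ^ 2 + 6 * F n * F (n + 1) + 4 * F (n + 1) ^ 2 := by
        rw [L_eq, hF4, hFo2, hFe]; ring
      have hsum : (∑ k ∈ Icc 1 (n + 1), L (2 * k) ^ 3) =
          (∑ k ∈ Icc 1 n, L (2 * k) ^ 3) + L (2 * (n + 1)) ^ 3 := sum_step _ n
      have hidx : 2 * (n + 1) = 2 * n + 2 := by ring
      have hidx2 : 2 * n + 2 + 1 = 2 * n + 3 := by omega
      have hidx3 : n + 1 + 1 = n + 2 := by ring
      have hcas := cassini n
      constructor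
      · intro hev
        have hodd : Odd n := by
          obtain ⟨k, hk⟩ := hev
          exact ⟨k - 1, by omega⟩
        have ihe := ihO hodd
        rw [hodd.neg_one_pow, hF2] at hcas
        rw [hsum, hidx, hidx2, hidx3, hL2, hL3, hLn1, hLn2, hF2]
        rw [hLn, hLn1, hL1] at ihe
        linear_combination ihe - (32 * F n ^ 4 + 64 * F n ^ 3 * F (n + 1) +
          48 * F n ^ 2 * F (n + 1) ^ 2 + 16 * F n * F (n + 1) ^ 3 - 48 * F (n + 1) ^ 4 +
          48 * F (n + 1) ^ 2 + 32 * F n * F (n + 1) + 32 * F n ^ 2) * hcas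
      · intro hodd1
        have hev : Even n := by
          obtain ⟨k, hk⟩ := hodd1
          exact ⟨k, by omega⟩
        have ihe := ihE hev
        rw [hev.neg_one_pow, hF2] at hcas
        rw [hsum, hidx, hidx2, hidx3, hL2, hL3, hLn1, hLn2, hF2]
        rw [hLn, hLn1, hL1] at ihe
        linear_combination ihe - (32 * F n ^ 4 + 64 * F n ^ 3 * F (n + 1) +
          48 * F n ^ 2 * F (n + 1) ^ 2 + 16 * F n * F (n + 1) ^ 3 - 48 * F (n + 1) ^ 4 -
          48 * F (n + 1) ^ 2 - 32 * F n * F (n + 1) - 32 * F n ^ 2) * hcas
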